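/- Let A be an associative ℂ-algebra, let δ₁, …, δ_k be pairwise commuting derivations of A, and let τ₀ : A → ℂ be a linear functional satisfying τ₀(ab) = τ₀(ba) for all a, b ∈ A and τ₀(δᵢ(a)) = 0 for all a ∈ A and 1 ≤ i ≤ k. Define τ(a₀, a₁, …, a_k) = (1/k!) Σ_{α ∈ S_k} sign(α) τ₀(a₀ · δ_{α(1)}(a₁) ⋯ δ_{α(k)}(a_k)). Then the Hochschild coboundary of τ vanishes: for all a₀, …, a_{k+1} ∈ A, Σ_{j=0}^{k} (−1)^j τ(a₀, …, a_j a_{j+1}, …, a_{k+1}) + (−1)^{k+1} τ(a_{k+1} a₀, a₁, …, a_k) = 0. Hence τ is a cyclic k-cocycle on A. -/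

import Mathlib

noncomputable section

/-- The cyclic `k`-cochain
`τ(a₀, …, a_k) = (1/k!) Σ_{α ∈ S_k} sign(α) τ₀(a₀ · δ_{α(1)}(a₁) ⋯ δ_{α(k)}(a_k))`
associated to a functional `τ₀` and derivations `δ₁, …, δ_k`. -/
def tauCyc {A : Type*} [Ring A] [Algebra ℂ A] {k : ℕ}
    (τ₀ : A →ₗ[ℂ] ℂ) (δ : Fin k → A →ₗ[ℂ] A) (a : Fin (k + 1) → A) : ℂ :=
  (k.factorial : ℂ)⁻¹ *
    ∑ α : Equiv.Perm (Fin k),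
      ((Equiv.Perm.sign α : ℤ) : ℂ) *
        τ₀ (a 0 * (List.ofFn fun i : Fin k => (δ (α i)) (a i.succ)).prod)

/-- The tuple `(a₀, …, a_j a_{j+1}, …, a_{k+1})` obtained from `(a₀, …, a_{k+1})`
by multiplying the `j`-th and `(j+1)`-st entries. -/
def mergeAt {A : Type*} [Mul A] {k : ℕ} (a : Fin (k + 2) → A) (j : Fin (k + 1)) :
    Fin (k + 1) → A := fun i =>
  if (i : ℕ) < (j : ℕ) then a (Fin.castSucc i)
  else if (i : ℕ) = (j : ℕ) then a (Fin.castSucc i) * a i.succ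
  else a i.succ

/-- The tuple `(a_{k+1} a₀, a₁, …, a_k)`. -/
def lastMerge {A : Type*} [Mul A] {k : ℕ} (a : Fin (k + 2) → A) :
    Fin (k + 1) → A := fun i =>
  if i = 0 then a (Fin.last (k + 1)) * a 0 else a (Fin.castSucc i)

section Helpers

variable {A : Type*} [Ring A] [Algebra ℂ A] {k : ℕ}

private def bb (a : Fin (k + 2) → A) (n : ℕ) : A :=
  if h : n < k + 2 then a ⟨n, h⟩ else 1

private def DD (δ : Fin k → A →ₗ[ℂ] A) (α : Equiv.Perm (Fin k))
    (a : Fin (k + 2) → A) (n : ℕ) : A :=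
  if h : n < k then δ (α ⟨n, h⟩) (bb a (n + 1)) else 1

private def EE (δ : Fin k → A →ₗ[ℂ] A) (α : Equiv.Perm (Fin k))
    (a : Fin (k + 2) → A) (n : ℕ) : A :=
  if h : n < k then δ (α ⟨n, h⟩) (bb a (n + 2)) else 1

private def MM (δ : Fin k → A →ₗ[ℂ] A) (α : Equiv.Perm (Fin k))
    (a : Fin (k + 2) → A) (n : ℕ) : A :=
  if h : n < k then δ (α ⟨n, h⟩) (bb a (n + 1) * bb a (n + 2)) else 1

private def XX (δ : Fin k → A →ₗ[ℂ] A) (α : Equiv.Perm (Fin k))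
    (a : Fin (k + 2) → A) (m : ℕ) : A :=
  bb a 0 * ((List.range m).map (DD δ α a)).prod * bb a (m + 1) *
    ((List.range' m (k - m)).map (EE δ α a)).prod

private lemma ofFn_eq_map_range {β : Type*} (f : Fin k → β) (F : ℕ → β)
    (h : ∀ (n : ℕ) (hn : n < k), f ⟨n, hn⟩ = F n) :
    List.ofFn f = (List.range k).map F := by
  apply List.ext_getElem (by simp)
  intro n h1 h2
  simp only [List.getElem_ofFn, List.getElem_map, List.getElem_range]
  exact h n (by simpa using h1)

private lemma a_cast (a : Fin (k + 2) → A) (i : Fin (k + 2)) (n : ℕ)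
    (hv : (i : ℕ) = n) : a i = bb a n := by
  subst hv
  simp [bb, i.isLt]

/-- Key per-permutation identity: the alternating sum over merge positions telescopes. -/
private lemma key (δ : Fin k → A →ₗ[ℂ] A)
    (hder : ∀ i (a b : A), δ i (a * b) = δ i a * b + a * δ i b)
    (α : Equiv.Perm (Fin k)) (a : Fin (k + 2) → A) :
    ∑ j : Fin (k + 1), (-1 : ℂ) ^ (j : ℕ) •
        ((mergeAt a j) 0 * (List.ofFn fun i : Fin k => δ (α i) ((mergeAt a j) i.succ)).prod)
      = (-1 : ℂ) ^ k •
        (a 0 * (List.ofFn fun i : Fin k => δ (α i) (a i.succ.castSucc)).prod *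
          a (Fin.last (k + 1))) := by
  have hsummand : ∀ j : Fin (k + 1),
      (mergeAt a j) 0 * (List.ofFn fun i : Fin k => δ (α i) ((mergeAt a j) i.succ)).prod
        = XX δ α a (j : ℕ) + (if (j : ℕ) = 0 then 0 else XX δ α a ((j : ℕ) - 1)) := by
    rintro ⟨jv, hjv⟩
    match jv, hjv with
    | 0, hjv =>
      have h0 : (mergeAt a (⟨0, hjv⟩ : Fin (k+1))) 0 = a 0 * a 1 := by
        simp only [mergeAt]
        norm_num
      have hlist : (List.ofFn fun i : Fin k => δ (α i) ((mergeAt a ⟨0, hjv⟩) i.succ))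
          = (List.range k).map (EE δ α a) := by
        apply ofFn_eq_map_range
        intro n hn
        simp only [mergeAt, Fin.val_succ, EE, dif_pos hn]
        rw [if_neg (by omega), if_neg (by omega)]
        congr 1
        exact a_cast a _ _ (by simp)
      rw [h0, hlist]
      simp only [XX, if_pos rfl, Nat.sub_zero, List.range_zero, List.map_nil,
        List.prod_nil, mul_one, add_zero, ← List.range_eq_range']
      rw [a_cast a 0 0 rfl, a_cast a 1 1 rfl]
      noncomm_ring
    | (jj+1), hjv =>
      have hjk : jj < k := by omega
      have h0 : (mergeAt a (⟨jj + 1, hjv⟩ : Fin (k+1))) 0 = a 0 := by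
        simp [mergeAt]
      have hlist : (List.ofFn fun i : Fin k => δ (α i) ((mergeAt a ⟨jj+1, hjv⟩) i.succ))
          = (List.range k).map (fun n =>
              if n + 1 < jj + 1 then DD δ α a n
              else if n + 1 = jj + 1 then MM δ α a n
              else EE δ α a n) := by
        apply ofFn_eq_map_range
        intro n hn
        simp only [mergeAt, Fin.val_succ, DD, MM, EE, dif_pos hn]
        by_cases h1 : n + 1 < jj + 1
        · rw [if_pos h1, if_pos h1]
          congr 1
          exact a_cast a _ _ (by simp)
        · rw [if_neg h1, if_neg h1]
          by_cases h2 : n + 1 = jj + 1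
          · rw [if_pos h2, if_pos h2]
            congr 1
            exact congrArg₂ (· * ·) (a_cast a _ _ (by simp)) (a_cast a _ _ (by simp))
          · rw [if_neg h2, if_neg h2]
            congr 1
            exact a_cast a _ _ (by simp)
      rw [h0, hlist]
      have hsplit : List.range k
          = List.range' 0 jj ++ List.range' jj 1 ++ List.range' (jj + 1) (k - (jj + 1)) := by
        have h1 : List.range' jj 1 ++ List.range' (jj + 1) (k - (jj + 1))
            = List.range' jj (k - jj) := by
          rw [List.range'_append_1 (s := jj) (m := 1) (n := k - (jj + 1))]
          congr 1
          omega
        rw [List.append_assoc, h1]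
        have h2 := List.range'_append_1 (s := 0) (m := jj) (n := k - jj)
        rw [Nat.zero_add] at h2
        rw [h2, List.range_eq_range']
        congr 1
        omega
      rw [hsplit, List.map_append, List.map_append, List.prod_append, List.prod_append]
      have hD : ((List.range' 0 jj).map (fun n =>
              if n + 1 < jj + 1 then DD δ α a n
              else if n + 1 = jj + 1 then MM δ α a n
              else EE δ α a n)).prod = ((List.range jj).map (DD δ α a)).prod := by
        rw [← List.range_eq_range']
        congr 1
        apply List.map_congr_left
        intro n hn
        rw [List.mem_range] at hn
        rw [if_pos (by omega)]
      have hM : ((List.range' jj 1).map (fun n =>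
              if n + 1 < jj + 1 then DD δ α a n
              else if n + 1 = jj + 1 then MM δ α a n
              else EE δ α a n)).prod = MM δ α a jj := by
        simp
      have hE : ((List.range' (jj + 1) (k - (jj + 1))).map (fun n =>
              if n + 1 < jj + 1 then DD δ α a n
              else if n + 1 = jj + 1 then MM δ α a n
              else EE δ α a n)).prod
            = ((List.range' (jj + 1) (k - (jj + 1))).map (EE δ α a)).prod := by
        congr 1
        apply List.map_congr_left
        intro n hn
        rw [List.mem_range'_1] at hn
        rw [if_neg (by omega), if_neg (by omega)]
      rw [hD, hM, hE]
      have hLeib : MM δ α a jj = DD δ α a jj * bb a (jj + 2) + bb a (jj + 1) * EE δ α a jj := by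
        simp only [MM, DD, EE, dif_pos hjk]
        exact hder _ _ _
      rw [hLeib]
      simp only [XX, if_neg (Nat.succ_ne_zero jj), Nat.add_sub_cancel]
      have hDsucc : ((List.range (jj + 1)).map (DD δ α a)).prod
          = ((List.range jj).map (DD δ α a)).prod * DD δ α a jj := by
        rw [List.range_succ, List.map_append, List.prod_append]
        simp
      have hEsucc : ((List.range' jj (k - jj)).map (EE δ α a)).prod
          = EE δ α a jj * ((List.range' (jj + 1) (k - (jj + 1))).map (EE δ α a)).prod := by
        have h2 : k - jj = (k - (jj + 1)) + 1 := by omega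
        rw [h2, List.range'_succ]
        simp
      rw [hDsucc, hEsucc, a_cast a 0 0 rfl]
      noncomm_ring
  calc ∑ j : Fin (k + 1), (-1 : ℂ) ^ (j : ℕ) •
        ((mergeAt a j) 0 * (List.ofFn fun i : Fin k => δ (α i) ((mergeAt a j) i.succ)).prod)
      = ∑ j ∈ Finset.range (k + 1), (-1 : ℂ) ^ j •
          (XX δ α a j + (if j = 0 then 0 else XX δ α a (j - 1))) := by
        rw [← Fin.sum_univ_eq_sum_range (fun j => (-1 : ℂ) ^ j •
          (XX δ α a j + (if j = 0 then 0 else XX δ α a (j - 1))))]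
        exact Finset.sum_congr rfl fun j _ => by rw [hsummand j]
    _ = (∑ j ∈ Finset.range (k + 1), (-1 : ℂ) ^ j • XX δ α a j)
        + ∑ j ∈ Finset.range (k + 1), (-1 : ℂ) ^ j •
            (if j = 0 then 0 else XX δ α a (j - 1)) := by
        rw [← Finset.sum_add_distrib]
        exact Finset.sum_congr rfl fun j _ => smul_add _ _ _
    _ = (-1 : ℂ) ^ k • XX δ α a k := by
        have hneg : ∀ i : ℕ, (-1 : ℂ) ^ (i + 1) • XX δ α a i
            = -((-1 : ℂ) ^ i • XX δ α a i) := by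
          intro i
          rw [pow_succ]
          simp [smul_smul, mul_comm]
        rw [Finset.sum_range_succ, Finset.sum_range_succ' (fun j => (-1 : ℂ) ^ j •
            (if j = 0 then 0 else XX δ α a (j - 1)))]
        have h2 : (∑ i ∈ Finset.range k, (-1 : ℂ) ^ (i + 1) •
              (if i + 1 = 0 then 0 else XX δ α a (i + 1 - 1)))
            = -∑ i ∈ Finset.range k, (-1 : ℂ) ^ i • XX δ α a i := by
          rw [← Finset.sum_neg_distrib]
          refine Finset.sum_congr rfl fun i _ => ?_
          rw [if_neg (Nat.succ_ne_zero i), Nat.add_sub_cancel, hneg]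
        rw [h2]
        simp only [pow_zero, one_smul, reduceIte, smul_zero, add_zero]
        abel
    _ = (-1 : ℂ) ^ k • (a 0 * (List.ofFn fun i : Fin k => δ (α i) (a i.succ.castSucc)).prod *
          a (Fin.last (k + 1))) := by
        congr 1
        simp only [XX, Nat.sub_self, List.range'_zero, List.map_nil, List.prod_nil, mul_one]
        have hlist : (List.ofFn fun i : Fin k => δ (α i) (a i.succ.castSucc))
            = (List.range k).map (DD δ α a) := by
          apply ofFn_eq_map_range
          intro n hn
          simp only [DD, dif_pos hn]
          congr 1
          exact a_cast a _ _ (by simp)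
        rw [hlist, a_cast a 0 0 rfl, a_cast a (Fin.last (k + 1)) (k + 1) (by simp)]

end Helpers

/-- if `δ₁, …, δ_k` are pairwise commuting derivations of an associative
`ℂ`-algebra `A` and `τ₀` is a trace vanishing on the images of the `δᵢ`, then the
Hochschild coboundary of the cochain `τ` vanishes:
`Σ_{j=0}^{k} (−1)^j τ(a₀, …, a_j a_{j+1}, …, a_{k+1})
  + (−1)^{k+1} τ(a_{k+1} a₀, a₁, …, a_k) = 0`. -/
theorem tauCyc_hochschild_coboundary_eq_zero {A : Type*} [Ring A] [Algebra ℂ A] {k : ℕ}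
    (δ : Fin k → A →ₗ[ℂ] A)
    (hder : ∀ i (a b : A), δ i (a * b) = δ i a * b + a * δ i b)
    (hcomm : ∀ i j (a : A), δ i (δ j a) = δ j (δ i a))
    (τ₀ : A →ₗ[ℂ] ℂ)
    (htr : ∀ a b : A, τ₀ (a * b) = τ₀ (b * a))
    (hvan : ∀ i (a : A), τ₀ (δ i a) = 0)
    (a : Fin (k + 2) → A) :
    (∑ j : Fin (k + 1), (-1 : ℂ) ^ (j : ℕ) * tauCyc τ₀ δ (mergeAt a j)) +
      (-1 : ℂ) ^ (k + 1) * tauCyc τ₀ δ (lastMerge a) = 0 := by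
  classical
  have hL : ∀ α : Equiv.Perm (Fin k),
      (lastMerge a) 0 * (List.ofFn fun i : Fin k => δ (α i) ((lastMerge a) i.succ)).prod
        = a (Fin.last (k + 1)) *
            (a 0 * (List.ofFn fun i : Fin k => δ (α i) (a i.succ.castSucc)).prod) := by
    intro α
    have h0 : (lastMerge a) 0 = a (Fin.last (k + 1)) * a 0 := by simp [lastMerge]
    have hfn : (fun i : Fin k => δ (α i) ((lastMerge a) i.succ))
        = fun i : Fin k => δ (α i) (a i.succ.castSucc) := by
      funext i
      simp [lastMerge, Fin.succ_ne_zero]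
    rw [h0, hfn, mul_assoc]
  have main : ∀ α : Equiv.Perm (Fin k),
      (∑ j : Fin (k + 1), (-1 : ℂ) ^ (j : ℕ) *
          τ₀ ((mergeAt a j) 0 *
            (List.ofFn fun i : Fin k => δ (α i) ((mergeAt a j) i.succ)).prod))
        + (-1 : ℂ) ^ (k + 1) *
            τ₀ ((lastMerge a) 0 *
              (List.ofFn fun i : Fin k => δ (α i) ((lastMerge a) i.succ)).prod) = 0 := by
    intro α
    have hsm : ∀ j : Fin (k + 1), (-1 : ℂ) ^ (j : ℕ) *
        τ₀ ((mergeAt a j) 0 *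
          (List.ofFn fun i : Fin k => δ (α i) ((mergeAt a j) i.succ)).prod)
        = τ₀ ((-1 : ℂ) ^ (j : ℕ) •
            ((mergeAt a j) 0 *
              (List.ofFn fun i : Fin k => δ (α i) ((mergeAt a j) i.succ)).prod)) := by
      intro j
      rw [map_smul, smul_eq_mul]
    rw [Finset.sum_congr rfl fun j _ => hsm j, ← map_sum, key δ hder α a, map_smul,
      smul_eq_mul, hL α, htr]
    rw [pow_succ]
    ring
  simp only [tauCyc, Finset.mul_sum]
  rw [Finset.sum_comm, ← Finset.sum_add_distrib]
  refine Finset.sum_eq_zero fun α _ => ?_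
  have expand : ∑ j : Fin (k + 1), (-1 : ℂ) ^ (j : ℕ) *
      ((↑k.factorial)⁻¹ * (((Equiv.Perm.sign α : ℤ) : ℂ) *
        τ₀ ((mergeAt a j) 0 *
          (List.ofFn fun i : Fin k => δ (α i) ((mergeAt a j) i.succ)).prod)))
      = (↑k.factorial)⁻¹ * (((Equiv.Perm.sign α : ℤ) : ℂ) *
          ∑ j : Fin (k + 1), (-1 : ℂ) ^ (j : ℕ) *
            τ₀ ((mergeAt a j) 0 *
              (List.ofFn fun i : Fin k => δ (α i) ((mergeAt a j) i.succ)).prod)) := by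
    simp only [Finset.mul_sum]
    exact Finset.sum_congr rfl fun j _ => by ring
  rw [expand]
  have hlast : (-1 : ℂ) ^ (k + 1) *
      ((↑k.factorial)⁻¹ * (((Equiv.Perm.sign α : ℤ) : ℂ) *
        τ₀ ((lastMerge a) 0 *
          (List.ofFn fun i : Fin k => δ (α i) ((lastMerge a) i.succ)).prod)))
      = (↑k.factorial)⁻¹ * (((Equiv.Perm.sign α : ℤ) : ℂ) *
          ((-1 : ℂ) ^ (k + 1) *
            τ₀ ((lastMerge a) 0 *
              (List.ofFn fun i : Fin k => δ (α i) ((lastMerge a) i.succ)).prod))) := by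
    ring
  rw [hlast, ← mul_add, ← mul_add, main α, mul_zero, mul_zero]

end
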